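/- Let (Ω, 𝓐, ℙ) be a probability space and Q : Ω → ℝⁿ, Y : Ω → ℝᵐ random vectors whose components are square-integrable. Let Σ_{QY} ∈ ℝ^{n×m} be the cross-covariance matrix with entries (Σ_{QY})_{ij} = Cov(Q_i, Y_j), and Σ_Y ∈ ℝ^{m×m} the covariance matrix with entries (Σ_Y)_{ij} = Cov(Y_i, Y_j); assume Σ_Y is invertible. Define the generalized Kalman gain K := Σ_{QY} Σ_Y⁻¹ and b := E[Q] − K E[Y]. Then for every matrix A ∈ ℝ^{n×m} and vector c ∈ ℝⁿ, E[‖Q − (K Y + b)‖²] ≤ E[‖Q − (A Y + c)‖²]; i.e., g_l(y) = K y + b is the best affine approximation in mean square of the conditional mean of Q given Y. -/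

import Mathlib

open MeasureTheory ProbabilityTheory

/-- Covariance of two real-valued random variables: `Cov(X, Z) = E[XZ] − E[X]E[Z]`. -/
noncomputable def covRV {Ω : Type*} [MeasurableSpace Ω] (P : Measure Ω) (X Z : Ω → ℝ) : ℝ :=
  (∫ ω, X ω * Z ω ∂P) - (∫ ω, X ω ∂P) * (∫ ω, Z ω ∂P)

section Aux
variable {Ω : Type*} [MeasurableSpace Ω] {P : Measure Ω} [IsProbabilityMeasure P]

lemma myIntMul {f g : Ω → ℝ} (hf : MemLp f 2 P) (hg : MemLp g 2 P) :
    Integrable (fun ω => f ω * g ω) P := by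
  have h := (((hf.add hg).integrable_sq.sub hf.integrable_sq).sub hg.integrable_sq).div_const 2
  have he : (fun ω => f ω * g ω) = fun ω => (((f ω + g ω)^2 - f ω^2) - g ω^2)/2 := by
    funext ω; ring
  simpa [he] using h

lemma memLpComb {m : ℕ} {Y : Ω → Fin m → ℝ} (hY : ∀ j, MemLp (fun ω => Y ω j) 2 P)
    (a : Fin m → ℝ) (c : ℝ) : MemLp (fun ω => ∑ j, a j * Y ω j + c) 2 P := by
  have h1 : MemLp (fun ω => ∑ j, a j * Y ω j) 2 P := by
    have h := memLp_finset_sum' (μ := P) (p := (2:ENNReal)) Finset.univ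
      (f := fun j ω => a j * Y ω j) (fun j _ => (hY j).const_mul (a j))
    have heq : (fun ω => ∑ j, a j * Y ω j) = ∑ j, fun ω => a j * Y ω j := by
      funext ω; simp
    rw [heq]; exact h
  exact h1.add (memLp_const c)

lemma coordMin {m : ℕ} {X : Ω → ℝ} {Y : Ω → Fin m → ℝ}
    (hX : MemLp X 2 P) (hY : ∀ j, MemLp (fun ω => Y ω j) 2 P)
    (k a : Fin m → ℝ) (b c : ℝ)
    (hr0 : ∫ ω, (X ω - (∑ j, k j * Y ω j + b)) ∂P = 0)
    (hrY : ∀ j, ∫ ω, (X ω - (∑ l, k l * Y ω l + b)) * Y ω j ∂P = 0) :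
    ∫ ω, (X ω - (∑ j, k j * Y ω j + b))^2 ∂P
      ≤ ∫ ω, (X ω - (∑ j, a j * Y ω j + c))^2 ∂P := by
  set r : Ω → ℝ := fun ω => X ω - (∑ j, k j * Y ω j + b) with hr
  set w : Ω → ℝ := fun ω => ∑ j, (a j - k j) * Y ω j + (c - b) with hw
  have hrL : MemLp r 2 P := hX.sub (memLpComb hY k b)
  have hwL : MemLp w 2 P := memLpComb hY (fun j => a j - k j) (c - b)
  -- key: X - (aY + c) = r - w
  have hdec : ∀ ω, X ω - (∑ j, a j * Y ω j + c) = r ω - w ω := by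
    intro ω
    simp only [hr, hw]
    have h2 : ∑ j, (a j - k j) * Y ω j = ∑ j, a j * Y ω j - ∑ j, k j * Y ω j := by
      rw [← Finset.sum_sub_distrib]
      exact Finset.sum_congr rfl fun j _ => by ring
    rw [h2]; ring
  have hrw0 : ∫ ω, r ω * w ω ∂P = 0 := by
    have he : ∀ ω, r ω * w ω
        = (∑ j, (a j - k j) * (r ω * Y ω j)) + (c - b) * r ω := by
      intro ω
      simp only [hw, mul_add, Finset.mul_sum]
      congr 1
      · exact Finset.sum_congr rfl fun j _ => by ring
      · ring
    calc ∫ ω, r ω * w ω ∂P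
        = ∫ ω, ((∑ j, (a j - k j) * (r ω * Y ω j)) + (c - b) * r ω) ∂P := by
          simp_rw [he]
      _ = (∑ j, (a j - k j) * ∫ ω, r ω * Y ω j ∂P) + (c - b) * ∫ ω, r ω ∂P := by
          rw [integral_add, integral_finset_sum, integral_const_mul]
          · congr 1
            exact Finset.sum_congr rfl fun j _ => by rw [integral_const_mul]
          · exact fun j _ => (myIntMul hrL (hY j)).const_mul _
          · exact integrable_finset_sum _ fun j _ => (myIntMul hrL (hY j)).const_mul _
          · exact (hrL.integrable one_le_two).const_mul _
      _ = 0 := by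
          rw [hr0]; simp [hr, hrY]
  have hexp : ∫ ω, (X ω - (∑ j, a j * Y ω j + c))^2 ∂P
      = ∫ ω, r ω ^2 ∂P - 2 * ∫ ω, r ω * w ω ∂P + ∫ ω, w ω ^2 ∂P := by
    simp_rw [hdec]
    have he : ∀ ω, (r ω - w ω)^2 = r ω^2 - 2*(r ω * w ω) + w ω^2 := fun ω => by ring
    simp_rw [he]
    rw [integral_add, integral_sub]
    · rw [integral_const_mul]
    · exact hrL.integrable_sq
    · exact (myIntMul hrL hwL).const_mul 2
    · exact (hrL.integrable_sq.sub ((myIntMul hrL hwL).const_mul 2))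
    · exact hwL.integrable_sq
  rw [hexp, hrw0]
  have hwnn : 0 ≤ ∫ ω, w ω ^2 ∂P := integral_nonneg fun ω => sq_nonneg _
  linarith
end Aux

/-- The affine map `y ↦ K y + b` with the generalized Kalman gain `K = Σ_{QY} Σ_Y⁻¹` and
`b = E[Q] − K E[Y]` is the best affine approximation in mean square of the conditional mean of `Q`
given `Y`. -/
theorem generalized_kalman_gain_best_affine_approximation
    {Ω : Type*} {mΩ : MeasurableSpace Ω} {P : Measure Ω} [IsProbabilityMeasure P]
    {n m : ℕ} {Q : Ω → (Fin n → ℝ)} {Y : Ω → (Fin m → ℝ)}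
    (hQmeas : Measurable Q) (hYmeas : Measurable Y)
    (hQ2 : ∀ i, MemLp (fun ω => Q ω i) 2 P) (hY2 : ∀ j, MemLp (fun ω => Y ω j) 2 P)
    (SigmaQY : Matrix (Fin n) (Fin m) ℝ)
    (hSigmaQY : ∀ i j, SigmaQY i j = covRV P (fun ω => Q ω i) (fun ω => Y ω j))
    (SigmaY : Matrix (Fin m) (Fin m) ℝ)
    (hSigmaY : ∀ i j, SigmaY i j = covRV P (fun ω => Y ω i) (fun ω => Y ω j))
    (hSigmaYinv : IsUnit SigmaY)
    (K : Matrix (Fin n) (Fin m) ℝ) (hK : K = SigmaQY * SigmaY⁻¹)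
    (b : Fin n → ℝ)
    (hb : b = (fun i => ∫ ω, Q ω i ∂P) - K.mulVec (fun j => ∫ ω, Y ω j ∂P)) :
    ∀ (A : Matrix (Fin n) (Fin m) ℝ) (c : Fin n → ℝ),
      ∫ ω, ∑ i, (Q ω i - (K.mulVec (Y ω) i + b i)) ^ 2 ∂P
        ≤ ∫ ω, ∑ i, (Q ω i - (A.mulVec (Y ω) i + c i)) ^ 2 ∂P := by
  intro A c
  simp only [Matrix.mulVec, dotProduct]
  set EQ : Fin n → ℝ := fun i => ∫ ω, Q ω i ∂P with hEQ
  set EY : Fin m → ℝ := fun j => ∫ ω, Y ω j ∂P with hEY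
  have hdet := (Matrix.isUnit_iff_isUnit_det _).mp hSigmaYinv
  have hKS : K * SigmaY = SigmaQY := by
    rw [hK, Matrix.mul_assoc, Matrix.nonsing_inv_mul _ hdet, Matrix.mul_one]
  have hbi : ∀ i, b i = EQ i - ∑ j, K i j * EY j := by
    intro i
    rw [hb]
    simp [Matrix.mulVec, dotProduct, hEQ, hEY]
  have hYint : ∀ j, Integrable (fun ω => Y ω j) P := fun j => (hY2 j).integrable one_le_two
  have hQint : ∀ i, Integrable (fun ω => Q ω i) P := fun i => (hQ2 i).integrable one_le_two
  have hQY : ∀ i j, ∫ ω, Q ω i * Y ω j ∂P = SigmaQY i j + EQ i * EY j := by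
    intro i j; rw [hSigmaQY i j, covRV]; ring
  have hYY : ∀ l j, ∫ ω, Y ω l * Y ω j ∂P = SigmaY l j + EY l * EY j := by
    intro l j; rw [hSigmaY l j, covRV]; ring
  -- residual integral is zero
  have hr0 : ∀ i, ∫ ω, (Q ω i - (∑ j, K i j * Y ω j + b i)) ∂P = 0 := by
    intro i
    rw [integral_sub (hQint i), integral_add, integral_finset_sum]
    · have : ∀ j ∈ Finset.univ, ∫ ω, K i j * Y ω j ∂P = K i j * EY j :=
        fun j _ => by rw [integral_const_mul]
      rw [Finset.sum_congr rfl this, integral_const]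
      simp [hbi i, hEQ]
    · exact fun j _ => (hYint j).const_mul _
    · exact integrable_finset_sum _ fun j _ => (hYint j).const_mul _
    · exact integrable_const _
    · exact (integrable_finset_sum _ fun j _ => (hYint j).const_mul _).add (integrable_const _)
  have hrY : ∀ i j, ∫ ω, (Q ω i - (∑ l, K i l * Y ω l + b i)) * Y ω j ∂P = 0 := by
    intro i j
    have he : ∀ ω, (Q ω i - (∑ l, K i l * Y ω l + b i)) * Y ω j
        = Q ω i * Y ω j - ((∑ l, K i l * (Y ω l * Y ω j)) + b i * Y ω j) := by
      intro ω
      have h2 : ∑ l, K i l * (Y ω l * Y ω j) = (∑ l, K i l * Y ω l) * Y ω j := by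
        rw [Finset.sum_mul]
        exact Finset.sum_congr rfl fun l _ => by ring
      rw [h2]; ring
    simp_rw [he]
    rw [integral_sub, integral_add, integral_finset_sum]
    · have h3 : ∀ l ∈ Finset.univ, ∫ ω, K i l * (Y ω l * Y ω j) ∂P
          = K i l * (SigmaY l j + EY l * EY j) := by
        intro l _; rw [integral_const_mul, hYY]
      rw [Finset.sum_congr rfl h3, integral_const_mul, hQY]
      have h4 : ∑ l, K i l * (SigmaY l j + EY l * EY j)
          = (∑ l, K i l * SigmaY l j) + (∑ l, K i l * EY l) * EY j := by
        rw [Finset.sum_mul, ← Finset.sum_add_distrib]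
        exact Finset.sum_congr rfl fun l _ => by ring
      have h5 : ∑ l, K i l * SigmaY l j = SigmaQY i j := by
        rw [← hKS]; simp [Matrix.mul_apply]
      rw [h4, h5, hbi i, hEY]
      ring
    · exact fun l _ => (myIntMul (hY2 l) (hY2 j)).const_mul _
    · exact integrable_finset_sum _ fun l _ => (myIntMul (hY2 l) (hY2 j)).const_mul _
    · exact (myIntMul (memLp_const (b i)) (hY2 j))
    · exact myIntMul (hQ2 i) (hY2 j)
    · exact ((integrable_finset_sum _ fun l _ => (myIntMul (hY2 l) (hY2 j)).const_mul _).add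
        (myIntMul (memLp_const (b i)) (hY2 j)))
  -- reduce to coordinates
  have hsqK : ∀ i, Integrable (fun ω => (Q ω i - (∑ j, K i j * Y ω j + b i))^2) P :=
    fun i => ((hQ2 i).sub (memLpComb hY2 (K i) (b i))).integrable_sq
  have hsqA : ∀ i, Integrable (fun ω => (Q ω i - (∑ j, A i j * Y ω j + c i))^2) P :=
    fun i => ((hQ2 i).sub (memLpComb hY2 (A i) (c i))).integrable_sq
  rw [integral_finset_sum _ (fun i _ => hsqK i), integral_finset_sum _ (fun i _ => hsqA i)]
  exact Finset.sum_le_sum fun i _ =>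
    coordMin (hQ2 i) hY2 (K i) (A i) (b i) (c i) (hr0 i) (hrY i)
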